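/- Let S(F) denote the Schwartz space of a finitely generated free group F with word-length seminorms ‖f‖_k = sup_g (1+|g|)^k |f(g)|. Define θ_k(f) = g ↦ e^{−|g|/k} χ_{E_k}(g) f(g), where E_k = {g : |g| ≤ k}. Then each θ_k is a finite-rank linear map and for every f ∈ S(F) and l ≥ 0, ‖f − θ_k(f)‖_l → 0 as k → ∞. -/

import Mathlib

open Real

/-- Word length on the free group. -/
def wordLength {N : ℕ} (g : FreeGroup (Fin N)) : ℕ := (FreeGroup.toWord g).length

/-- The truncation maps `θ_k(f)(g) = e^{−|g|/k} χ_{E_k}(g) f(g)` on functions on the free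
group, where `E_k = {g : |g| ≤ k}`. -/
noncomputable def freeGroupTrunc (N k : ℕ) :
    (FreeGroup (Fin N) → ℂ) →ₗ[ℂ] (FreeGroup (Fin N) → ℂ) where
  toFun f := fun g =>
    (Real.exp (-(wordLength g : ℝ) / k) : ℂ) * (if wordLength g ≤ k then f g else 0)
  map_add' f h := by
    funext g
    by_cases hg : wordLength g ≤ k
    · simp only [Pi.add_apply, if_pos hg]; ring
    · simp only [Pi.add_apply, if_neg hg, mul_zero, add_zero]
  map_smul' c f := by
    funext g
    by_cases hg : wordLength g ≤ k
    · simp only [Pi.smul_apply, if_pos hg, RingHom.id_apply, smul_eq_mul]; ring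
    · simp only [Pi.smul_apply, if_neg hg, RingHom.id_apply, smul_eq_mul, mul_zero]

lemma ball_finite (N k : ℕ) : {g : FreeGroup (Fin N) | wordLength g ≤ k}.Finite := by
  have h : {g : FreeGroup (Fin N) | wordLength g ≤ k}
      = FreeGroup.toWord ⁻¹' {l : List (Fin N × Bool) | l.length ≤ k} := rfl
  rw [h]
  exact (List.finite_length_le _ k).preimage FreeGroup.toWord_injective.injOn

lemma trunc_apply (N k : ℕ) (f : FreeGroup (Fin N) → ℂ) (g : FreeGroup (Fin N)) :
    freeGroupTrunc N k f g =
      (Real.exp (-(wordLength g : ℝ) / k) : ℂ) * (if wordLength g ≤ k then f g else 0) := rfl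

/-- On the Schwartz space of a free group `F` on `N ≥ 2` generators (functions
`f` with `‖f‖_l = sup_g (1+|g|)^l |f(g)| < ∞` for all `l`), each `θ_k` (for `k ≥ 1`) is a
finite-rank linear map, and for every Schwartz `f` and every `l ≥ 0`,
`‖f − θ_k f‖_l → 0` as `k → ∞`. -/
theorem stmt_14 (N : ℕ) (hN : 2 ≤ N) :
    (∀ k : ℕ, 1 ≤ k → FiniteDimensional ℂ ↥(LinearMap.range (freeGroupTrunc N k))) ∧
    (∀ f : FreeGroup (Fin N) → ℂ,
      (∀ m : ℕ, ∃ C : ℝ, ∀ g, (1 + (wordLength g : ℝ)) ^ m * ‖f g‖ ≤ C) →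
      ∀ l : ℕ, ∀ ε > (0 : ℝ), ∃ K : ℕ, ∀ k ≥ K, 1 ≤ k →
        ∀ g : FreeGroup (Fin N),
          (1 + (wordLength g : ℝ)) ^ l * ‖f g - freeGroupTrunc N k f g‖ ≤ ε) := by
  constructor
  · intro k _
    haveI hfin : Finite {g : FreeGroup (Fin N) // wordLength g ≤ k} := (ball_finite N k).to_subtype
    set S := LinearMap.range (freeGroupTrunc N k)
    let R : ↥S →ₗ[ℂ] ({g : FreeGroup (Fin N) // wordLength g ≤ k} → ℂ) :=
      (LinearMap.funLeft ℂ ℂ Subtype.val).comp S.subtype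
    apply FiniteDimensional.of_injective R
    rintro ⟨x, f, rfl⟩ ⟨y, h, rfl⟩ hxy
    apply Subtype.ext
    funext g
    by_cases hg : wordLength g ≤ k
    · exact congrFun hxy ⟨g, hg⟩
    · simp only [trunc_apply, if_neg hg, mul_zero]
  · intro f hf l ε hε
    obtain ⟨C, hC⟩ := hf (l + 1)
    have hC0 : 0 ≤ C := le_trans (by positivity) (hC 1)
    refine ⟨⌈C / ε⌉₊ + 1, fun k hk hk1 g => ?_⟩
    have hkpos : (0 : ℝ) < k := by exact_mod_cast hk1
    have hkK : (⌈C / ε⌉₊ : ℝ) ≤ k := by exact_mod_cast le_trans (Nat.le_succ _) hk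
    have hkC : C ≤ k * ε := by
      have h1 : C / ε ≤ (k : ℝ) := le_trans (Nat.le_ceil _) hkK
      calc C = (C / ε) * ε := by field_simp
        _ ≤ k * ε := by gcongr
    set w : ℝ := (wordLength g : ℝ) with hw
    have hw0 : 0 ≤ w := Nat.cast_nonneg _
    have hCg : (1 + w) ^ (l + 1) * ‖f g‖ ≤ C := hC g
    by_cases hg : wordLength g ≤ k
    · rw [trunc_apply, if_pos hg]
      have hrw : f g - (Real.exp (-w / k) : ℂ) * f g
          = ((1 - Real.exp (-w / k) : ℝ) : ℂ) * f g := by push_cast; ring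
      have hexp0 : -w / (k : ℝ) ≤ 0 := by
        apply div_nonpos_of_nonpos_of_nonneg <;> linarith
      have he1 : Real.exp (-w / (k : ℝ)) ≤ 1 := Real.exp_le_one_iff.mpr hexp0
      have he2 : 1 - Real.exp (-w / (k : ℝ)) ≤ w / k := by
        have h := Real.add_one_le_exp (-w / (k : ℝ))
        have hnd : -w / (k : ℝ) = -(w / k) := neg_div _ _
        linarith [hnd ▸ h]
      rw [hrw, norm_mul, Complex.norm_real, Real.norm_eq_abs,
        abs_of_nonneg (by linarith : (0:ℝ) ≤ 1 - Real.exp (-w / k))]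
      calc (1 + w) ^ l * ((1 - Real.exp (-w / k)) * ‖f g‖)
          ≤ (1 + w) ^ l * ((w / k) * ‖f g‖) := by
            apply mul_le_mul_of_nonneg_left (mul_le_mul_of_nonneg_right he2 (norm_nonneg _))
            positivity
        _ = ((1 + w) ^ l * w * ‖f g‖) / k := by ring
        _ ≤ ((1 + w) ^ (l + 1) * ‖f g‖) / k := by
            gcongr
            calc (1 + w) ^ l * w ≤ (1 + w) ^ l * (1 + w) := by
                  apply mul_le_mul_of_nonneg_left (by linarith) (by positivity)
              _ = (1 + w) ^ (l + 1) := (pow_succ _ _).symm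
        _ ≤ C / k := by gcongr
        _ ≤ ε := by rw [div_le_iff₀ hkpos]; linarith
    · rw [trunc_apply, if_neg hg, mul_zero, sub_zero]
      have hkw : (k : ℝ) ≤ w := by
        rw [hw]; exact_mod_cast (le_of_lt (lt_of_not_ge hg))
      have h1w : (0 : ℝ) < 1 + w := by linarith
      calc (1 + w) ^ l * ‖f g‖ = ((1 + w) ^ (l + 1) * ‖f g‖) / (1 + w) := by
            rw [pow_succ]; field_simp
        _ ≤ C / (1 + w) := by gcongr
        _ ≤ C / k := by apply div_le_div_of_nonneg_left hC0 hkpos; linarith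
        _ ≤ ε := by rw [div_le_iff₀ hkpos]; linarith
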